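/- For every integer n ≥ 1, with l := x_0^{-2} x_1 x_0^{n+1} x_1^{-n} and r := x_0^2 l in Thompson's group F, there exists a path from l to r of length 4n + 4 inside the ball B_{2n+2} that passes through the identity element of F; one such path is given by successively left-multiplying l by the letters of the word (x_1 x_0^{n+1})(x_1^{-n} x_0^{-1})(x_1^{-1} x_0 x_1^{n-1})(x_1 x_0^{1-n}), read from right to left. -/

import Mathlib

namespace ThompsonF

/-- The defining relators of Thompson's group `F`:
for `i < j`, the relator `x_i⁻¹ * x_j * x_i * x_{j+1}⁻¹`. -/
def rels : Set (FreeGroup ℕ) :=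
  {r | ∃ i j : ℕ, i < j ∧
    r = (FreeGroup.of i)⁻¹ * FreeGroup.of j * FreeGroup.of i * (FreeGroup.of (j + 1))⁻¹}

/-- Thompson's group `F`, presented by `⟨x₀, x₁, … ∣ x_i⁻¹ x_j x_i = x_{j+1} for i < j⟩`. -/
abbrev F : Type := PresentedGroup rels

/-- The generator `x_i` of Thompson's group `F`. -/
def x (i : ℕ) : F := PresentedGroup.of i

/-- The symmetrized generating set `{x₀, x₀⁻¹, x₁, x₁⁻¹}`. -/
def gens : Set F := {x 0, (x 0)⁻¹, x 1, (x 1)⁻¹}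

/-- The word length `ℓ(g)` with respect to `{x₀, x₁}`: the least `m` such that `g` is a
product of `m` elements of `{x₀, x₀⁻¹, x₁, x₁⁻¹}`. -/
noncomputable def len (g : F) : ℕ :=
  sInf {m | ∃ w : List F, w.length = m ∧ (∀ a ∈ w, a ∈ gens) ∧ w.prod = g}

/-- `IsPathIn n f g m c` means `c 0 = f, c 1, …, c m = g` is a path of length `m`
from `f` to `g` inside the ball `B_n`: consecutive vertices differ by left
multiplication by a generator, and every vertex has length at most `n`. -/
def IsPathIn (n : ℕ) (f g : F) (m : ℕ) (c : ℕ → F) : Prop :=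
  c 0 = f ∧ c m = g ∧ (∀ k < m, c (k + 1) * (c k)⁻¹ ∈ gens) ∧ ∀ k ≤ m, len (c k) ≤ n

/-- The element `l = x₀⁻² x₁ x₀^{n+1} x₁⁻ⁿ`. -/
def l (n : ℕ) : F := x 0 ^ (-2 : ℤ) * x 1 * x 0 ^ ((n : ℤ) + 1) * x 1 ^ (-(n : ℤ))

/-- The element `r = x₀² l`. -/
def r (n : ℕ) : F := x 0 ^ 2 * l n

/-- The word `(x₁ x₀^{n+1})(x₁⁻ⁿ x₀⁻¹)(x₁⁻¹ x₀ x₁^{n-1})(x₁ x₀^{1-n})`,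
listed in right-to-left (application) order. -/
noncomputable def word6 (n : ℕ) : List F :=
  List.replicate (n - 1) (x 0)⁻¹ ++ [x 1] ++ List.replicate (n - 1) (x 1) ++ [x 0] ++
    [(x 1)⁻¹] ++ [(x 0)⁻¹] ++ List.replicate n (x 1)⁻¹ ++
    List.replicate (n + 1) (x 0) ++ [x 1]

lemma rel_x {i j : ℕ} (h : i < j) : (x i)⁻¹ * x j * x i = x (j + 1) := by
  have hmem : ((FreeGroup.of i)⁻¹ * FreeGroup.of j * FreeGroup.of i * (FreeGroup.of (j + 1))⁻¹ :
      FreeGroup ℕ) ∈ Subgroup.normalClosure rels :=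
    Subgroup.subset_normalClosure ⟨i, j, h, rfl⟩
  have h1 : (PresentedGroup.mk rels)
      ((FreeGroup.of i)⁻¹ * FreeGroup.of j * FreeGroup.of i * (FreeGroup.of (j + 1))⁻¹) = 1 := by
    rw [show (PresentedGroup.mk rels : FreeGroup ℕ →* F)
        ((FreeGroup.of i)⁻¹ * FreeGroup.of j * FreeGroup.of i * (FreeGroup.of (j + 1))⁻¹) =
        QuotientGroup.mk' (Subgroup.normalClosure rels)
        ((FreeGroup.of i)⁻¹ * FreeGroup.of j * FreeGroup.of i * (FreeGroup.of (j + 1))⁻¹) from rfl,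
      QuotientGroup.mk'_apply]
    exact (QuotientGroup.eq_one_iff _).mpr hmem
  have h2 : (x i)⁻¹ * x j * x i * (x (j+1))⁻¹ = 1 := by
    simpa [x, PresentedGroup.of, map_mul, map_inv] using h1
  have := mul_eq_one_iff_eq_inv.mp h2
  simpa using this

lemma conj0 (m : ℕ) : (x 0)⁻¹ ^ (m+1) * x 1 * (x 0) ^ (m+1) = x (m+2) := by
  induction m with
  | zero => simpa using rel_x (show 0 < 1 by norm_num)
  | succ m ih =>
    have h := rel_x (show 0 < m + 2 by omega)
    calc (x 0)⁻¹ ^ (m+2) * x 1 * (x 0) ^ (m+2)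
        = (x 0)⁻¹ * ((x 0)⁻¹ ^ (m+1) * x 1 * (x 0) ^ (m+1)) * x 0 := by
          rw [pow_succ, pow_succ']; group
      _ = (x 0)⁻¹ * x (m+2) * x 0 := by rw [ih]
      _ = x (m+3) := h

lemma conj1 (m : ℕ) : (x 1)⁻¹ ^ m * ((x 0)⁻¹ * x 1 * x 0) * (x 1) ^ m = x (m+2) := by
  induction m with
  | zero => simpa using rel_x (show 0 < 1 by norm_num)
  | succ m ih =>
    have h := rel_x (show 1 < m + 2 by omega)
    calc (x 1)⁻¹ ^ (m+1) * ((x 0)⁻¹ * x 1 * x 0) * (x 1) ^ (m+1)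
        = (x 1)⁻¹ * ((x 1)⁻¹ ^ m * ((x 0)⁻¹ * x 1 * x 0) * (x 1) ^ m) * x 1 := by
          rw [pow_succ, pow_succ']; group
      _ = (x 1)⁻¹ * x (m+2) * x 1 := by rw [ih]
      _ = x (m+3) := h

lemma keyid (n : ℕ) : (x 0)⁻¹ ^ (n+1) * x 1 * (x 0) ^ (n+1) * (x 1)⁻¹ ^ n
    = (x 1)⁻¹ ^ n * ((x 0)⁻¹ * x 1 * x 0) := by
  rw [conj0 n, ← conj1 n, mul_assoc]
  simp [← inv_pow, inv_pow]

/-- `l n` in zpow-free form. -/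
lemma l_eq' (n : ℕ) : l n = (x 0)⁻¹ ^ 2 * x 1 * (x 0) ^ (n+1) * (x 1)⁻¹ ^ n := by
  have h1 : (x 0 : F) ^ (-2 : ℤ) = (x 0)⁻¹ ^ 2 := by
    rw [show (-2 : ℤ) = -((2:ℕ):ℤ) from by norm_num, zpow_neg, zpow_natCast, inv_pow]
  have h2 : (x 0 : F) ^ ((n : ℤ) + 1) = (x 0) ^ (n+1) := by
    rw [show ((n : ℤ) + 1) = ((n+1 : ℕ) : ℤ) from by push_cast; ring, zpow_natCast]
  have h3 : (x 1 : F) ^ (-(n : ℤ)) = (x 1)⁻¹ ^ n := by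
    rw [zpow_neg, zpow_natCast, inv_pow]
  rw [l, h1, h2, h3]

/-- `l n` as a word of length `2n+2`. -/
lemma l_eq (n : ℕ) (hn : 1 ≤ n) :
    l n = (x 0) ^ (n-1) * ((x 1)⁻¹ ^ n * ((x 0)⁻¹ * x 1 * x 0)) := by
  obtain ⟨m, rfl⟩ : ∃ m, n = m + 1 := ⟨n - 1, by omega⟩
  simp only [Nat.add_sub_cancel]
  calc l (m+1) = (x 0) ^ m * ((x 0)⁻¹ ^ (m+2) * x 1 * (x 0) ^ (m+2) * (x 1)⁻¹ ^ (m+1)) := by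
        rw [l_eq']; group
    _ = (x 0) ^ m * ((x 1)⁻¹ ^ (m+1) * ((x 0)⁻¹ * x 1 * x 0)) := by rw [keyid (m+1)]

lemma len_le_of_word (w : List F) (hw : ∀ a ∈ w, a ∈ gens) : len w.prod ≤ w.length :=
  Nat.sInf_le ⟨w, rfl, hw, rfl⟩

lemma len_le_of_eq {g : F} (w : List F) (hw : ∀ a ∈ w, a ∈ gens) (h : g = w.prod)
    {n : ℕ} (hl : w.length ≤ n) : len g ≤ n :=
  h ▸ le_trans (len_le_of_word w hw) hl

lemma x0_mem : x 0 ∈ gens := by simp [gens]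
lemma x0i_mem : (x 0)⁻¹ ∈ gens := by simp [gens]
lemma x1_mem : x 1 ∈ gens := by simp [gens]
lemma x1i_mem : (x 1)⁻¹ ∈ gens := by simp [gens]

lemma word6_mem (n : ℕ) : ∀ a ∈ word6 n, a ∈ gens := by
  intro a ha
  simp only [word6, List.mem_append, List.mem_replicate, List.mem_singleton] at ha
  rcases ha with ((((((((⟨-, rfl⟩ | rfl) | ⟨-, rfl⟩) | rfl) | rfl) | rfl) | ⟨-, rfl⟩) | ⟨-, rfl⟩) | rfl) <;>
    first | exact x0_mem | exact x0i_mem | exact x1_mem | exact x1i_mem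

lemma word6_length (n : ℕ) (hn : 1 ≤ n) : (word6 n).length = 4 * n + 4 := by
  simp [word6]; omega

/-- The standard word shape. -/
noncomputable def W (a b c d e f : ℕ) : List F :=
  List.replicate a (x 1) ++ List.replicate b (x 0) ++ List.replicate c (x 1)⁻¹ ++
    List.replicate d (x 0)⁻¹ ++ List.replicate e (x 1) ++ List.replicate f (x 0)

lemma W_mem (a b c d e f : ℕ) : ∀ g ∈ W a b c d e f, g ∈ gens := by
  intro g hg
  simp only [W, List.mem_append, List.mem_replicate] at hg
  rcases hg with ((((⟨-, rfl⟩ | ⟨-, rfl⟩) | ⟨-, rfl⟩) | ⟨-, rfl⟩) | ⟨-, rfl⟩) | ⟨-, rfl⟩ <;>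
    first | exact x0_mem | exact x0i_mem | exact x1_mem | exact x1i_mem

lemma W_length (a b c d e f : ℕ) : (W a b c d e f).length = a+b+c+d+e+f := by simp [W]; omega

lemma W_prod (a b c d e f : ℕ) :
    (W a b c d e f).prod = x 1 ^ a * x 0 ^ b * (x 1)⁻¹ ^ c * (x 0)⁻¹ ^ d * x 1 ^ e * x 0 ^ f := by
  simp [W, List.prod_append, List.prod_replicate, mul_assoc]

/-- the prefix product formula -/
lemma P_eq (n k : ℕ) : ((word6 n).take k).reverse.prod =
    x 1 ^ (min (k - (n - 1) - 1 - (n - 1) - 1 - 1 - 1 - n - (n + 1)) 1) *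
      x 0 ^ (min (k - (n - 1) - 1 - (n - 1) - 1 - 1 - 1 - n) (n + 1)) *
      (x 1)⁻¹ ^ (min (k - (n - 1) - 1 - (n - 1) - 1 - 1 - 1) n) *
      (x 0)⁻¹ ^ (min (k - (n - 1) - 1 - (n - 1) - 1 - 1) 1) *
      (x 1)⁻¹ ^ (min (k - (n - 1) - 1 - (n - 1) - 1) 1) *
      x 0 ^ (min (k - (n - 1) - 1 - (n - 1)) 1) *
      x 1 ^ (min (k - (n - 1) - 1) (n - 1)) *
      x 1 ^ (min (k - (n - 1)) 1) *
      (x 0)⁻¹ ^ (min k (n - 1)) := by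
  rw [show word6 n = List.replicate (n - 1) (x 0)⁻¹ ++ (List.replicate 1 (x 1) ++
    (List.replicate (n - 1) (x 1) ++ (List.replicate 1 (x 0) ++
    (List.replicate 1 (x 1)⁻¹ ++ (List.replicate 1 (x 0)⁻¹ ++ (List.replicate n (x 1)⁻¹ ++
    (List.replicate (n + 1) (x 0) ++ List.replicate 1 (x 1)))))))) from by simp [word6]]
  simp only [List.take_append, List.take_replicate, List.reverse_append,
    List.reverse_replicate, List.prod_append, List.prod_replicate, List.length_replicate]

/-- For `n ≥ 1` there is a path from `l` to `r` of length `4n + 4` inside `B_{2n+2}`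
that passes through the identity; one such path is obtained by successively
left-multiplying `l` by the letters of
`(x₁ x₀^{n+1})(x₁⁻ⁿ x₀⁻¹)(x₁⁻¹ x₀ x₁^{n-1})(x₁ x₀^{1-n})`, read from right to left. -/
theorem path_through_identity :
    ∀ n : ℕ, 1 ≤ n →
      IsPathIn (2 * n + 2) (l n) (r n) (4 * n + 4)
        (fun k => ((word6 n).take k).reverse.prod * l n) ∧
      ∃ k ≤ 4 * n + 4, ((word6 n).take k).reverse.prod * l n = 1 := by
  intro n hn
  have hend : ((word6 n).take (2*n+2)).reverse.prod * l n = 1 := by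
    rw [P_eq, l_eq n hn]
    rw [show min (2*n+2 - (n - 1) - 1 - (n - 1) - 1 - 1 - 1 - n - (n + 1)) 1 = 0 by omega,
      show min (2*n+2 - (n - 1) - 1 - (n - 1) - 1 - 1 - 1 - n) (n + 1) = 0 by omega,
      show min (2*n+2 - (n - 1) - 1 - (n - 1) - 1 - 1 - 1) n = 0 by omega,
      show min (2*n+2 - (n - 1) - 1 - (n - 1) - 1 - 1) 1 = 1 by omega,
      show min (2*n+2 - (n - 1) - 1 - (n - 1) - 1) 1 = 1 by omega,
      show min (2*n+2 - (n - 1) - 1 - (n - 1)) 1 = 1 by omega,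
      show min (2*n+2 - (n - 1) - 1) (n - 1) = n - 1 by omega,
      show min (2*n+2 - (n - 1)) 1 = 1 by omega,
      show min (2*n+2) (n - 1) = n - 1 by omega]
    obtain ⟨m, rfl⟩ : ∃ m, n = m + 1 := ⟨n - 1, by omega⟩
    simp only [Nat.add_sub_cancel]
    group
  have hP : ((word6 n).take (4*n+4)).reverse.prod * l n = x 1 * x 0 ^ (n+1) * (x 1)⁻¹ ^ n := by
    rw [P_eq, l_eq n hn]
    rw [show min (4*n+4 - (n - 1) - 1 - (n - 1) - 1 - 1 - 1 - n - (n + 1)) 1 = 1 by omega,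
      show min (4*n+4 - (n - 1) - 1 - (n - 1) - 1 - 1 - 1 - n) (n + 1) = n+1 by omega,
      show min (4*n+4 - (n - 1) - 1 - (n - 1) - 1 - 1 - 1) n = n by omega,
      show min (4*n+4 - (n - 1) - 1 - (n - 1) - 1 - 1) 1 = 1 by omega,
      show min (4*n+4 - (n - 1) - 1 - (n - 1) - 1) 1 = 1 by omega,
      show min (4*n+4 - (n - 1) - 1 - (n - 1)) 1 = 1 by omega,
      show min (4*n+4 - (n - 1) - 1) (n - 1) = n - 1 by omega,
      show min (4*n+4 - (n - 1)) 1 = 1 by omega,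
      show min (4*n+4) (n - 1) = n - 1 by omega]
    obtain ⟨m, rfl⟩ : ∃ m, n = m + 1 := ⟨n - 1, by omega⟩
    simp only [Nat.add_sub_cancel]
    group
  refine ⟨⟨by simp, ?_, ?_, ?_⟩, 2*n+2, by omega, hend⟩
  · -- endpoint
    show ((word6 n).take (4*n+4)).reverse.prod * l n = r n
    rw [hP, r, l_eq n hn]
    calc x 1 * x 0 ^ (n+1) * (x 1)⁻¹ ^ n
        = x 0 ^ (n+1) * ((x 0)⁻¹ ^ (n+1) * x 1 * x 0 ^ (n+1) * (x 1)⁻¹ ^ n) := by group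
      _ = x 0 ^ (n+1) * ((x 1)⁻¹ ^ n * ((x 0)⁻¹ * x 1 * x 0)) := by rw [keyid n]
      _ = x 0 ^ 2 * (x 0 ^ (n-1) * ((x 1)⁻¹ ^ n * ((x 0)⁻¹ * x 1 * x 0))) := by
          obtain ⟨m, rfl⟩ : ∃ m, n = m + 1 := ⟨n - 1, by omega⟩
          simp only [Nat.add_sub_cancel]
          group
  · -- steps
    intro k hk
    have hk' : k < (word6 n).length := by rw [word6_length n hn]; exact hk
    show ((word6 n).take (k+1)).reverse.prod * l n * (((word6 n).take k).reverse.prod * l n)⁻¹ ∈ gens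
    rw [List.take_succ, List.getElem?_eq_getElem hk']
    simp only [Option.toList_some, List.reverse_append, List.prod_append, List.reverse_singleton,
      List.prod_cons, List.prod_nil, mul_one]
    have : (word6 n)[k] * ((word6 n).take k).reverse.prod * l n *
        (((word6 n).take k).reverse.prod * l n)⁻¹ = (word6 n)[k] := by group
    rw [this]
    exact word6_mem n _ (List.getElem_mem hk')
  · -- length bounds
    intro k hk
    show len (((word6 n).take k).reverse.prod * l n) ≤ 2*n+2
    rcases (show k ≤ n-1 ∨ (n ≤ k ∧ k ≤ 2*n-1) ∨ k = 2*n ∨ k = 2*n+1 ∨ k = 2*n+2 ∨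
        (2*n+3 ≤ k ∧ k ≤ 3*n+2) ∨ (3*n+3 ≤ k ∧ k ≤ 4*n+3) ∨ k = 4*n+4 from by omega) with
      h | h | h | h | h | h | h | h
    · -- R1 : k ≤ n-1
      refine len_le_of_eq (W 0 (n-1-k) n 1 1 1) (W_mem _ _ _ _ _ _) ?_ (by rw [W_length]; omega)
      rw [W_prod, P_eq, l_eq n hn]
      rw [show min (k - (n - 1) - 1 - (n - 1) - 1 - 1 - 1 - n - (n + 1)) 1 = 0 by omega,
        show min (k - (n - 1) - 1 - (n - 1) - 1 - 1 - 1 - n) (n + 1) = 0 by omega,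
        show min (k - (n - 1) - 1 - (n - 1) - 1 - 1 - 1) n = 0 by omega,
        show min (k - (n - 1) - 1 - (n - 1) - 1 - 1) 1 = 0 by omega,
        show min (k - (n - 1) - 1 - (n - 1) - 1) 1 = 0 by omega,
        show min (k - (n - 1) - 1 - (n - 1)) 1 = 0 by omega,
        show min (k - (n - 1) - 1) (n - 1) = 0 by omega,
        show min (k - (n - 1)) 1 = 0 by omega,
        show min k (n - 1) = k by omega]
      obtain ⟨d, rfl⟩ : ∃ d, n = k + d + 1 := ⟨n - 1 - k, by omega⟩
      rw [show k + d + 1 - 1 = k + d by omega, show k + d - k = d by omega]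
      group
    · -- R2 : n ≤ k ≤ 2n-1
      refine len_le_of_eq (W 0 0 (n-(k-n)-1) 1 1 1) (W_mem _ _ _ _ _ _) ?_
        (by rw [W_length]; omega)
      rw [W_prod, P_eq, l_eq n hn]
      rw [show min (k - (n - 1) - 1 - (n - 1) - 1 - 1 - 1 - n - (n + 1)) 1 = 0 by omega,
        show min (k - (n - 1) - 1 - (n - 1) - 1 - 1 - 1 - n) (n + 1) = 0 by omega,
        show min (k - (n - 1) - 1 - (n - 1) - 1 - 1 - 1) n = 0 by omega,
        show min (k - (n - 1) - 1 - (n - 1) - 1 - 1) 1 = 0 by omega,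
        show min (k - (n - 1) - 1 - (n - 1) - 1) 1 = 0 by omega,
        show min (k - (n - 1) - 1 - (n - 1)) 1 = 0 by omega,
        show min (k - (n - 1) - 1) (n - 1) = k - n by omega,
        show min (k - (n - 1)) 1 = 1 by omega,
        show min k (n - 1) = n - 1 by omega]
      obtain ⟨t, u, rfl, rfl⟩ : ∃ t u, n = t + u + 1 ∧ k = (t + u + 1) + t :=
        ⟨k - n, n - (k - n) - 1, by omega, by omega⟩
      rw [show t + u + 1 + t - (t + u + 1) = t by omega,
        show t + u + 1 - 1 = t + u by omega,
        show t + u + 1 - t - 1 = u by omega]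
      group
    · -- R3 : k = 2n
      subst h
      refine len_le_of_eq (W 1 1 0 0 0 0) (W_mem _ _ _ _ _ _) ?_ (by rw [W_length]; omega)
      rw [W_prod, P_eq, l_eq n hn]
      rw [show min (2*n - (n - 1) - 1 - (n - 1) - 1 - 1 - 1 - n - (n + 1)) 1 = 0 by omega,
        show min (2*n - (n - 1) - 1 - (n - 1) - 1 - 1 - 1 - n) (n + 1) = 0 by omega,
        show min (2*n - (n - 1) - 1 - (n - 1) - 1 - 1 - 1) n = 0 by omega,
        show min (2*n - (n - 1) - 1 - (n - 1) - 1 - 1) 1 = 0 by omega,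
        show min (2*n - (n - 1) - 1 - (n - 1) - 1) 1 = 0 by omega,
        show min (2*n - (n - 1) - 1 - (n - 1)) 1 = 1 by omega,
        show min (2*n - (n - 1) - 1) (n - 1) = n - 1 by omega,
        show min (2*n - (n - 1)) 1 = 1 by omega,
        show min (2*n) (n - 1) = n - 1 by omega]
      obtain ⟨m, rfl⟩ : ∃ m, n = m + 1 := ⟨n - 1, by omega⟩
      simp only [Nat.add_sub_cancel]
      group
    · -- R4 : k = 2n+1
      subst h
      refine len_le_of_eq (W 0 1 0 0 0 0) (W_mem _ _ _ _ _ _) ?_ (by rw [W_length]; omega)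
      rw [W_prod, P_eq, l_eq n hn]
      rw [show min (2*n+1 - (n - 1) - 1 - (n - 1) - 1 - 1 - 1 - n - (n + 1)) 1 = 0 by omega,
        show min (2*n+1 - (n - 1) - 1 - (n - 1) - 1 - 1 - 1 - n) (n + 1) = 0 by omega,
        show min (2*n+1 - (n - 1) - 1 - (n - 1) - 1 - 1 - 1) n = 0 by omega,
        show min (2*n+1 - (n - 1) - 1 - (n - 1) - 1 - 1) 1 = 0 by omega,
        show min (2*n+1 - (n - 1) - 1 - (n - 1) - 1) 1 = 1 by omega,
        show min (2*n+1 - (n - 1) - 1 - (n - 1)) 1 = 1 by omega,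
        show min (2*n+1 - (n - 1) - 1) (n - 1) = n - 1 by omega,
        show min (2*n+1 - (n - 1)) 1 = 1 by omega,
        show min (2*n+1) (n - 1) = n - 1 by omega]
      obtain ⟨m, rfl⟩ : ∃ m, n = m + 1 := ⟨n - 1, by omega⟩
      simp only [Nat.add_sub_cancel]
      group
    · -- R5 : k = 2n+2
      subst h
      refine len_le_of_eq (W 0 0 0 0 0 0) (W_mem _ _ _ _ _ _) ?_ (by rw [W_length]; omega)
      rw [W_prod]
      simp only [pow_zero, mul_one, one_mul]
      exact hend
    · -- R6 : 2n+3 ≤ k ≤ 3n+2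
      refine len_le_of_eq (W 0 0 (k-(2*n+2)) 0 0 0) (W_mem _ _ _ _ _ _) ?_
        (by rw [W_length]; omega)
      rw [W_prod, P_eq, l_eq n hn]
      rw [show min (k - (n - 1) - 1 - (n - 1) - 1 - 1 - 1 - n - (n + 1)) 1 = 0 by omega,
        show min (k - (n - 1) - 1 - (n - 1) - 1 - 1 - 1 - n) (n + 1) = 0 by omega,
        show min (k - (n - 1) - 1 - (n - 1) - 1 - 1 - 1) n = k - (2*n+2) by omega,
        show min (k - (n - 1) - 1 - (n - 1) - 1 - 1) 1 = 1 by omega,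
        show min (k - (n - 1) - 1 - (n - 1) - 1) 1 = 1 by omega,
        show min (k - (n - 1) - 1 - (n - 1)) 1 = 1 by omega,
        show min (k - (n - 1) - 1) (n - 1) = n - 1 by omega,
        show min (k - (n - 1)) 1 = 1 by omega,
        show min k (n - 1) = n - 1 by omega]
      obtain ⟨j, m, hj, rfl, rfl⟩ : ∃ j m, j ≤ m + 1 ∧ n = m + 1 ∧ k = 2*(m+1)+2+j :=
        ⟨k - (2*n+2), n - 1, by omega, by omega, by omega⟩
      rw [show 2*(m+1)+2+j - (2*(m+1)+2) = j by omega]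
      simp only [Nat.add_sub_cancel]
      group
    · -- R7 : 3n+3 ≤ k ≤ 4n+3
      refine len_le_of_eq (W 0 (k-(3*n+2)) n 0 0 0) (W_mem _ _ _ _ _ _) ?_
        (by rw [W_length]; omega)
      rw [W_prod, P_eq, l_eq n hn]
      rw [show min (k - (n - 1) - 1 - (n - 1) - 1 - 1 - 1 - n - (n + 1)) 1 = 0 by omega,
        show min (k - (n - 1) - 1 - (n - 1) - 1 - 1 - 1 - n) (n + 1) = k - (3*n+2) by omega,
        show min (k - (n - 1) - 1 - (n - 1) - 1 - 1 - 1) n = n by omega,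
        show min (k - (n - 1) - 1 - (n - 1) - 1 - 1) 1 = 1 by omega,
        show min (k - (n - 1) - 1 - (n - 1) - 1) 1 = 1 by omega,
        show min (k - (n - 1) - 1 - (n - 1)) 1 = 1 by omega,
        show min (k - (n - 1) - 1) (n - 1) = n - 1 by omega,
        show min (k - (n - 1)) 1 = 1 by omega,
        show min k (n - 1) = n - 1 by omega]
      obtain ⟨s, m, hs, rfl, rfl⟩ : ∃ s m, s ≤ m + 2 ∧ n = m + 1 ∧ k = 3*(m+1)+2+s :=
        ⟨k - (3*n+2), n - 1, by omega, by omega, by omega⟩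
      rw [show 3*(m+1)+2+s - (3*(m+1)+2) = s by omega]
      simp only [Nat.add_sub_cancel]
      group
    · -- R8 : k = 4n+4
      subst h
      refine len_le_of_eq (W 1 (n+1) n 0 0 0) (W_mem _ _ _ _ _ _) ?_
        (by rw [W_length]; omega)
      rw [W_prod, hP]
      group


end ThompsonF
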